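/- Let G be a locally compact Abelian group, μ ∈ M(G) a spectrally reasonable measure, and ν ∈ M(G) a measure with natural spectrum. Then μ ∗ ν has natural spectrum. Moreover, if μ is spectrally reasonable and invertible in M(G), then μ⁻¹ is spectrally reasonable. -/

import Mathlib

open WeakDual

open Filter Topology

/-- `μ ∈ M(G)` (modelled as a commutative complex Banach algebra `A` with the dual group `Ĝ`
given as a subset `Ghat` of the Gelfand space) has natural spectrum if `σ(μ)` equals the
closure of the range of its Fourier–Stieltjes transform. -/
def HasNaturalSpectrum {A : Type*} [NormedCommRing A] [NormedAlgebra ℂ A]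
    (Ghat : Set (characterSpace ℂ A)) (μ : A) : Prop :=
  spectrum ℂ μ = closure ((fun φ : characterSpace ℂ A => φ μ) '' Ghat)

namespace NatSpecAux

variable {A : Type*} [NormedCommRing A] [NormedAlgebra ℂ A] [CompleteSpace A]
variable {Ghat : Set (characterSpace ℂ A)}

/-- In a trivial algebra every element has natural spectrum. -/
lemma hns_of_subsingleton [Subsingleton A] (Ghat : Set (characterSpace ℂ A)) (x : A) :
    HasNaturalSpectrum Ghat x := by
  have hGe : Ghat = ∅ := by
    ext φ
    simp only [Set.mem_empty_iff_false, iff_false]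
    intro _
    have h1 : (φ : characterSpace ℂ A) (1 : A) = 1 := map_one φ
    rw [show (1 : A) = 0 from Subsingleton.elim _ _, map_zero] at h1
    exact one_ne_zero h1.symm
  have hsp : spectrum ℂ x = ∅ := by
    ext k
    simp only [Set.mem_empty_iff_false, iff_false, spectrum.mem_iff, not_not]
    exact isUnit_of_subsingleton _
  unfold HasNaturalSpectrum
  rw [hGe, Set.image_empty, closure_empty, hsp]

/-- The closure of the image of `Ghat` is always contained in the spectrum. -/
lemma closure_subset_spectrum (Ghat : Set (characterSpace ℂ A)) (x : A) :
    closure ((fun φ : characterSpace ℂ A => φ x) '' Ghat) ⊆ spectrum ℂ x := by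
  refine closure_minimal ?_ (spectrum.isClosed x)
  rintro - ⟨φ, -, rfl⟩
  exact CharacterSpace.apply_mem_spectrum φ x

/-- Characters send `algebraMap` to the scalar. -/
lemma char_algebraMap (φ : characterSpace ℂ A) (r : ℂ) : φ (algebraMap ℂ A r) = r := by
  rw [AlgHomClass.commutes]
  simp

/-- Natural spectrum is preserved by (invertible) affine maps. -/
lemma hns_affine {x : A} (h : HasNaturalSpectrum Ghat x)
    {a : ℂ} (b : ℂ) (ha : a ≠ 0) :
    HasNaturalSpectrum Ghat (a • x + algebraMap ℂ A b) := by
  refine Set.Subset.antisymm ?_ (closure_subset_spectrum _ _)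
  intro lam hlam
  have key : (lam - b) / a ∈ spectrum ℂ x := by
    rw [spectrum.mem_iff]
    intro hu
    refine spectrum.mem_iff.mp hlam ?_
    have h3 : a * ((lam - b) / a) = lam - b := by field_simp
    have h2 : algebraMap ℂ A lam - (a • x + algebraMap ℂ A b)
        = algebraMap ℂ A a * (algebraMap ℂ A ((lam - b) / a) - x) := by
      rw [mul_sub, ← map_mul, h3, Algebra.smul_def, map_sub]
      ring
    rw [h2]
    exact ((isUnit_iff_ne_zero.mpr ha).map (algebraMap ℂ A)).mul hu
  rw [h] at key
  obtain ⟨s, hsmem, hstend⟩ := mem_closure_iff_seq_limit.mp key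
  choose ψ hψG hψval0 using hsmem
  have hψval : ∀ n, ψ n x = s n := hψval0
  have heq : ∀ n, ψ n (a • x + algebraMap ℂ A b) = a * s n + b := by
    intro n
    rw [map_add, Algebra.smul_def, map_mul, char_algebraMap, char_algebraMap, hψval n]
  refine mem_closure_iff_seq_limit.mpr ⟨fun n => a * s n + b,
    fun n => ⟨ψ n, hψG n, heq n⟩, ?_⟩
  have := (hstend.const_mul a).add_const b
  rwa [show a * ((lam - b) / a) + b = lam by field_simp; ring] at this

/-- The inverse of an invertible element with natural spectrum has natural spectrum. -/
lemma hns_inverse {T : A} (h : HasNaturalSpectrum Ghat T) (hT : IsUnit T) :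
    HasNaturalSpectrum Ghat (↑hT.unit⁻¹ : A) := by
  have hTT : T * (↑hT.unit⁻¹ : A) = 1 := hT.mul_val_inv
  refine Set.Subset.antisymm ?_ (closure_subset_spectrum _ _)
  intro lam hlam
  have hTi : IsUnit (↑hT.unit⁻¹ : A) := (hT.unit⁻¹).isUnit
  have hlam0 : lam ≠ 0 := by
    rintro rfl
    refine spectrum.mem_iff.mp hlam ?_
    rw [map_zero, zero_sub]
    exact hTi.neg
  have key : lam⁻¹ ∈ spectrum ℂ T := by
    rw [spectrum.mem_iff]
    intro hu
    refine spectrum.mem_iff.mp hlam ?_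
    have hll : algebraMap ℂ A lam * algebraMap ℂ A lam⁻¹ = 1 := by
      rw [← map_mul, mul_inv_cancel₀ hlam0, map_one]
    have h2 : algebraMap ℂ A lam - (↑hT.unit⁻¹ : A)
        = (algebraMap ℂ A lam * (↑hT.unit⁻¹ : A)) * (T - algebraMap ℂ A lam⁻¹) := by
      rw [mul_sub, mul_assoc, mul_comm ((hT.unit⁻¹ : Aˣ) : A) T, hTT, mul_one,
        mul_right_comm, hll, one_mul]
    have hu' : IsUnit (T - algebraMap ℂ A lam⁻¹) := by
      rw [← neg_sub]; exact hu.neg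
    rw [h2]
    exact (((isUnit_iff_ne_zero.mpr hlam0).map (algebraMap ℂ A)).mul hTi).mul hu'
  rw [h] at key
  obtain ⟨s, hsmem, hstend⟩ := mem_closure_iff_seq_limit.mp key
  choose ψ hψG hψval0 using hsmem
  have hψval : ∀ n, ψ n T = s n := hψval0
  have heq : ∀ n, ψ n (↑hT.unit⁻¹ : A) = (s n)⁻¹ := by
    intro n
    have e : ψ n T * ψ n (↑hT.unit⁻¹ : A) = 1 := by rw [← map_mul, hTT, map_one]
    rw [← hψval n]
    exact eq_inv_of_mul_eq_one_left (by rw [mul_comm]; exact e)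
  refine mem_closure_iff_seq_limit.mpr ⟨fun n => (s n)⁻¹,
    fun n => ⟨ψ n, hψG n, heq n⟩, ?_⟩
  have := hstend.inv₀ (inv_ne_zero hlam0)
  rwa [inv_inv] at this

/-- If `μ` is spectrally reasonable, `μ` has natural spectrum, and `T` is an invertible
element with natural spectrum, then `μ * T` has natural spectrum. -/
lemma hns_mul_unit {μ : A}
    (hμ : ∀ ν : A, HasNaturalSpectrum Ghat ν → HasNaturalSpectrum Ghat (μ + ν))
    (hμN : HasNaturalSpectrum Ghat μ) {T : A} (hT : IsUnit T)
    (hTN : HasNaturalSpectrum Ghat T) :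
    HasNaturalSpectrum Ghat (μ * T) := by
  have hTT : T * (↑hT.unit⁻¹ : A) = 1 := hT.mul_val_inv
  refine Set.Subset.antisymm ?_ (closure_subset_spectrum _ _)
  intro lam hlam
  by_cases hlam0 : lam = 0
  · subst hlam0
    have hmu_nu : ¬ IsUnit μ := by
      intro hc
      refine spectrum.mem_iff.mp hlam ?_
      rw [map_zero, zero_sub]
      exact (hc.mul hT).neg
    have h0 : (0 : ℂ) ∈ spectrum ℂ μ := by
      rw [spectrum.mem_iff, map_zero, zero_sub]
      intro hc
      exact hmu_nu (by simpa using hc.neg)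
    rw [hμN] at h0
    obtain ⟨s, hsmem, hstend⟩ := mem_closure_iff_seq_limit.mp h0
    choose ψ hψG hψval0 using hsmem
    have hψval : ∀ n, ψ n μ = s n := hψval0
    have heq : ∀ n, ψ n (μ * T) = s n * ψ n T := by
      intro n; rw [map_mul, hψval n]
    refine mem_closure_iff_seq_limit.mpr ⟨fun n => s n * ψ n T,
      fun n => ⟨ψ n, hψG n, heq n⟩, ?_⟩
    refine squeeze_zero_norm (a := fun n => ‖s n‖ * (‖T‖ * ‖(1 : A)‖)) (fun n => ?_) ?_
    · rw [norm_mul]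
      exact mul_le_mul_of_nonneg_left
        (spectrum.norm_le_norm_mul_of_mem (CharacterSpace.apply_mem_spectrum _ T))
        (norm_nonneg _)
    · have hn : Tendsto (fun n => ‖s n‖) atTop (𝓝 0) := by
        simpa using hstend.norm
      simpa using hn.mul_const (‖T‖ * ‖(1 : A)‖)
  · -- lam ≠ 0
    set Ti : A := (↑hT.unit⁻¹ : A) with hTi_def
    have hTiN : HasNaturalSpectrum Ghat Ti := hns_inverse hTN hT
    have hXN : HasNaturalSpectrum Ghat (μ + (-lam) • Ti) := by
      have h1 := hns_affine hTiN (a := -lam) 0 (neg_ne_zero.mpr hlam0)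
      rw [map_zero, add_zero] at h1
      exact hμ _ h1
    have hfac : T * (μ + (-lam) • Ti) = μ * T - algebraMap ℂ A lam := by
      rw [mul_add, mul_smul_comm, hTT, neg_smul, Algebra.algebraMap_eq_smul_one,
        mul_comm T μ, ← sub_eq_add_neg]
    have h0 : (0 : ℂ) ∈ spectrum ℂ (μ + (-lam) • Ti) := by
      rw [spectrum.mem_iff, map_zero, zero_sub]
      intro hc
      have hX : IsUnit (μ + (-lam) • Ti) := by simpa using hc.neg
      refine spectrum.mem_iff.mp hlam ?_
      have h2 : algebraMap ℂ A lam - μ * T = -(T * (μ + (-lam) • Ti)) := by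
        rw [hfac]; ring
      rw [h2]
      exact (hT.mul hX).neg
    rw [hXN] at h0
    obtain ⟨s, hsmem, hstend⟩ := mem_closure_iff_seq_limit.mp h0
    choose ψ hψG hψval0 using hsmem
    have hψval : ∀ n, ψ n (μ + (-lam) • Ti) = s n := hψval0
    have heq : ∀ n, ψ n (μ * T) = lam + ψ n T * s n := by
      intro n
      have hx : s n = ψ n μ + (-lam) * ψ n Ti := by
        rw [← hψval n, map_add, Algebra.smul_def, map_mul, char_algebraMap]
      have h1 : ψ n T * ψ n Ti = 1 := by rw [← map_mul, hTT, map_one]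
      rw [map_mul, hx]
      linear_combination lam * h1
    refine mem_closure_iff_seq_limit.mpr ⟨fun n => ψ n (μ * T),
      fun n => ⟨ψ n, hψG n, rfl⟩, ?_⟩
    have hrw : (fun n => ψ n (μ * T)) = fun n => lam + ψ n T * s n := funext heq
    rw [hrw]
    have hz : Tendsto (fun n => ψ n T * s n) atTop (𝓝 0) := by
      refine squeeze_zero_norm (a := fun n => (‖T‖ * ‖(1 : A)‖) * ‖s n‖) (fun n => ?_) ?_
      · rw [norm_mul]
        exact mul_le_mul_of_nonneg_right
          (spectrum.norm_le_norm_mul_of_mem (CharacterSpace.apply_mem_spectrum _ T))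
          (norm_nonneg _)
      · have hn : Tendsto (fun n => ‖s n‖) atTop (𝓝 0) := by
          simpa using hstend.norm
        simpa using hn.const_mul (‖T‖ * ‖(1 : A)‖)
    simpa using tendsto_const_nhds.add hz

/-- Scaled version of spectral reasonableness. -/
lemma hns_smul_mu_add {μ : A}
    (hμ : ∀ ν : A, HasNaturalSpectrum Ghat ν → HasNaturalSpectrum Ghat (μ + ν))
    {a : ℂ} (ha : a ≠ 0) {ρ : A} (hρ : HasNaturalSpectrum Ghat ρ) :
    HasNaturalSpectrum Ghat (a • μ + ρ) := by
  have h1 : HasNaturalSpectrum Ghat (a⁻¹ • ρ) := by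
    have := hns_affine hρ (a := a⁻¹) 0 (inv_ne_zero ha)
    rwa [map_zero, add_zero] at this
  have h2 := hμ _ h1
  have h3 := hns_affine h2 (a := a) 0 ha
  rwa [map_zero, add_zero, smul_add, smul_smul, mul_inv_cancel₀ ha, one_smul] at h3

/-- Part 1: if `μ` is spectrally reasonable and `ν` has natural spectrum then `μ * ν` has
natural spectrum. -/
lemma part1 {μ : A}
    (hμ : ∀ ν : A, HasNaturalSpectrum Ghat ν → HasNaturalSpectrum Ghat (μ + ν))
    (ν : A) (hν : HasNaturalSpectrum Ghat ν) :
    HasNaturalSpectrum Ghat (μ * ν) := by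
  rcases subsingleton_or_nontrivial A with hA | hA
  · exact hns_of_subsingleton _ _
  have hGne : Ghat.Nonempty := by
    have h1 : (spectrum ℂ ν).Nonempty := spectrum.nonempty ν
    rw [hν] at h1
    exact Set.image_nonempty.mp (closure_nonempty_iff.mp h1)
  have h0 : HasNaturalSpectrum Ghat (0 : A) := by
    unfold HasNaturalSpectrum
    have himg : (fun φ : characterSpace ℂ A => φ (0 : A)) '' Ghat = {0} := by
      have hfun : (fun φ : characterSpace ℂ A => φ (0 : A)) = fun _ => (0 : ℂ) :=
        funext fun φ => map_zero φ
      rw [hfun, Set.Nonempty.image_const hGne]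
    rw [spectrum.zero_eq, himg, closure_singleton]
  have hμN : HasNaturalSpectrum Ghat μ := by
    have := hμ 0 h0; rwa [add_zero] at this
  set w : ℂ := ((‖ν‖ * ‖(1 : A)‖ + 1 : ℝ) : ℂ) with hw
  have hwnorm : ‖w‖ = ‖ν‖ * ‖(1 : A)‖ + 1 := by
    rw [hw, Complex.norm_real, Real.norm_eq_abs, abs_of_nonneg (by positivity)]
  have hw0 : w ≠ 0 := by
    intro hc
    rw [hc, norm_zero] at hwnorm
    have : (0 : ℝ) < ‖ν‖ * ‖(1 : A)‖ + 1 := by positivity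
    linarith
  have hT : IsUnit (ν - algebraMap ℂ A w) := by
    by_contra hc
    have hmem : w ∈ spectrum ℂ ν := by
      rw [spectrum.mem_iff]
      intro hc2
      exact hc (by simpa using hc2.neg)
    have hle := spectrum.norm_le_norm_mul_of_mem hmem
    rw [hwnorm] at hle
    linarith
  have hTN : HasNaturalSpectrum Ghat (ν - algebraMap ℂ A w) := by
    have := hns_affine hν (a := 1) (-w) one_ne_zero
    rwa [one_smul, map_neg, ← sub_eq_add_neg] at this
  have hMT := hns_mul_unit hμ hμN hT hTN
  have hfinal := hns_smul_mu_add hμ hw0 hMT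
  have hid : w • μ + μ * (ν - algebraMap ℂ A w) = μ * ν := by
    rw [mul_sub, Algebra.smul_def, mul_comm (algebraMap ℂ A w) μ]
    ring
  rwa [hid] at hfinal

/-- Part 2: if `μ` is spectrally reasonable and invertible, then `μ⁻¹` is spectrally
reasonable. -/
lemma part2 {μ : A}
    (hμ : ∀ ν : A, HasNaturalSpectrum Ghat ν → HasNaturalSpectrum Ghat (μ + ν))
    (hu : IsUnit μ) (ν : A) (hν : HasNaturalSpectrum Ghat ν) :
    HasNaturalSpectrum Ghat (Ring.inverse μ + ν) := by
  rcases subsingleton_or_nontrivial A with hA | hA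
  · exact hns_of_subsingleton _ _
  refine Set.Subset.antisymm ?_ (closure_subset_spectrum _ _)
  intro lam hlam
  have hνl : HasNaturalSpectrum Ghat (ν - algebraMap ℂ A lam) := by
    have := hns_affine hν (a := 1) (-lam) one_ne_zero
    rwa [one_smul, map_neg, ← sub_eq_add_neg] at this
  have hEN : HasNaturalSpectrum Ghat (μ * (ν - algebraMap ℂ A lam) + 1) := by
    have h1 := part1 hμ _ hνl
    have h2 := hns_affine h1 (a := 1) 1 one_ne_zero
    rwa [one_smul, map_one] at h2
  have hMinv : μ * Ring.inverse μ = 1 := Ring.mul_inverse_cancel μ hu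
  have h0 : (0 : ℂ) ∈ spectrum ℂ (μ * (ν - algebraMap ℂ A lam) + 1) := by
    rw [spectrum.mem_iff, map_zero, zero_sub]
    intro hc
    have hE : IsUnit (μ * (ν - algebraMap ℂ A lam) + 1) := by simpa using hc.neg
    have hfac : μ * (Ring.inverse μ + ν - algebraMap ℂ A lam)
        = μ * (ν - algebraMap ℂ A lam) + 1 := by
      rw [mul_sub, mul_add, hMinv]; ring
    have hX : IsUnit (Ring.inverse μ + ν - algebraMap ℂ A lam) := by
      rw [← hfac] at hE
      exact isUnit_of_mul_isUnit_right hE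
    refine spectrum.mem_iff.mp hlam ?_
    have h3 : algebraMap ℂ A lam - (Ring.inverse μ + ν)
        = -(Ring.inverse μ + ν - algebraMap ℂ A lam) := by ring
    rw [h3]
    exact hX.neg
  rw [hEN] at h0
  obtain ⟨s, hsmem, hstend⟩ := mem_closure_iff_seq_limit.mp h0
  choose ψ hψG hψval0 using hsmem
  have hψval : ∀ n, ψ n (μ * (ν - algebraMap ℂ A lam) + 1) = s n := hψval0
  have heq : ∀ n, ψ n (Ring.inverse μ + ν) = lam + ψ n (Ring.inverse μ) * s n := by
    intro n
    have e2 : ψ n μ * ψ n (Ring.inverse μ) = 1 := by rw [← map_mul, hMinv, map_one]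
    have hx : s n = ψ n μ * (ψ n ν - lam) + 1 := by
      rw [← hψval n, map_add, map_mul, map_sub, char_algebraMap, map_one]
    rw [map_add, hx]
    linear_combination (lam - ψ n ν) * e2
  refine mem_closure_iff_seq_limit.mpr ⟨fun n => ψ n (Ring.inverse μ + ν),
    fun n => ⟨ψ n, hψG n, rfl⟩, ?_⟩
  have hrw : (fun n => ψ n (Ring.inverse μ + ν))
      = fun n => lam + ψ n (Ring.inverse μ) * s n := funext heq
  rw [hrw]
  have hz : Tendsto (fun n => ψ n (Ring.inverse μ) * s n) atTop (𝓝 0) := by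
    refine squeeze_zero_norm (a := fun n => (‖Ring.inverse μ‖ * ‖(1 : A)‖) * ‖s n‖) (fun n => ?_) ?_
    · rw [norm_mul]
      exact mul_le_mul_of_nonneg_right
        (spectrum.norm_le_norm_mul_of_mem (CharacterSpace.apply_mem_spectrum _ _))
        (norm_nonneg _)
    · have hn : Tendsto (fun n => ‖s n‖) atTop (𝓝 0) := by
        simpa using hstend.norm
      simpa using hn.const_mul (‖Ring.inverse μ‖ * ‖(1 : A)‖)
  simpa using tendsto_const_nhds.add hz

end NatSpecAux

/-- Let `G` be a locally compact Abelian group, `μ ∈ M(G)` spectrally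
reasonable (i.e. `μ + ν` has natural spectrum for every `ν` with natural spectrum) and
`ν ∈ M(G)` with natural spectrum. Then `μ ∗ ν` has natural spectrum. Moreover, if `μ` is
spectrally reasonable and invertible in `M(G)`, then `μ⁻¹` is spectrally reasonable. -/
theorem spectrallyReasonable_mul_and_inverse
    {A : Type*} [NormedCommRing A] [NormedAlgebra ℂ A] [CompleteSpace A]
    (Ghat : Set (characterSpace ℂ A))
    (μ : A)
    (hμ : ∀ ν : A, HasNaturalSpectrum Ghat ν → HasNaturalSpectrum Ghat (μ + ν)) :
    (∀ ν : A, HasNaturalSpectrum Ghat ν → HasNaturalSpectrum Ghat (μ * ν)) ∧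
      (IsUnit μ → ∀ ν : A, HasNaturalSpectrum Ghat ν →
        HasNaturalSpectrum Ghat (Ring.inverse μ + ν)) := by
  exact ⟨fun ν hν => NatSpecAux.part1 hμ ν hν,
    fun hu ν hν => NatSpecAux.part2 hμ hu ν hν⟩
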